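/- In the Yangian Y(gl_{1|1}), the relation (u−v)[d_1(u), e_1(v)] = d_1(u)(e_1(v) − e_1(u)) holds as an identity of formal series (coefficientwise after clearing the factor u−v). -/

import Mathlib

/-!
Common setup: the super Yangian `Y(gl_{m|n})`, defined as the quotient of the free
algebra on generators `t_{ij}^{(r)}` (here `(i, j, r) : Fin (m+n) × Fin (m+n) × ℕ`
encodes `t_{ij}^{(r+1)}`) by the defining relations, obtained by equating the
coefficients of `u^{-r} v^{-s}` in
`(u-v)[t_{ij}(u), t_{kl}(v)]
   = (-1)^{ī j̄ + ī k̄ + j̄ k̄} (t_{kj}(u) t_{il}(v) - t_{kj}(v) t_{il}(u))`.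
Power series in `u^{-1}` are modelled by `PowerSeries`, whose variable stands
for `u^{-1}`.
-/

noncomputable section

namespace SuperYangian

open scoped BigOperators

/-- Generator index: `(i, j, r)` encodes the generator `t_{ij}^{(r+1)}`. -/
abbrev Gen (N : ℕ) := Fin N × Fin N × ℕ

/-- The free algebra on the generators. -/
abbrev FA (N : ℕ) := FreeAlgebra ℂ (Gen N)

/-- Parity of an index: `0` for the first `m` indices, `1` for the remaining ones. -/
def par (m : ℕ) {N : ℕ} (i : Fin N) : ℕ := if (i : ℕ) < m then 0 else 1

/-- The sign `(-1)^{ī j̄ + ī k̄ + j̄ k̄}`. -/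
def sgn3 (m : ℕ) {N : ℕ} (i j k : Fin N) : ℤ :=
  (-1) ^ (par m i * par m j + par m i * par m k + par m j * par m k)

/-- The series `t_{ij}(u) = δ_{ij} + Σ_{r ≥ 1} t_{ij}^{(r)} u^{-r}` over the free algebra. -/
def tF {N : ℕ} (i j : Fin N) : PowerSeries (FA N) :=
  PowerSeries.mk fun r =>
    if r = 0 then (if i = j then 1 else 0) else FreeAlgebra.ι ℂ (i, j, r - 1)

/-- The element of the free algebra expressing, at bidegree `u^{-r} v^{-s}`, the defining
relation `(u-v)[t_{ij}(u), t_{kl}(v)]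
  = (-1)^{ī j̄ + ī k̄ + j̄ k̄}(t_{kj}(u) t_{il}(v) - t_{kj}(v) t_{il}(u))`. -/
def relElt (m : ℕ) {N : ℕ} (i j k l : Fin N) (r s : ℕ) : FA N :=
  ((PowerSeries.coeff (r+1) (tF i j)) * (PowerSeries.coeff s (tF k l))
      - (PowerSeries.coeff s (tF k l)) * (PowerSeries.coeff (r+1) (tF i j)))
  - ((PowerSeries.coeff r (tF i j)) * (PowerSeries.coeff (s+1) (tF k l))
      - (PowerSeries.coeff (s+1) (tF k l)) * (PowerSeries.coeff r (tF i j)))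
  - sgn3 m i j k •
      ((PowerSeries.coeff r (tF k j)) * (PowerSeries.coeff s (tF i l))
        - (PowerSeries.coeff s (tF k j)) * (PowerSeries.coeff r (tF i l)))

/-- The defining relations of `Y(gl_{m|n})`. -/
inductive YRel (m n : ℕ) : FA (m+n) → FA (m+n) → Prop
  | rel (i j k l : Fin (m+n)) (r s : ℕ) : YRel m n (relElt m i j k l r s) 0

/-- The super Yangian `Y(gl_{m|n})`. -/
abbrev Yangian (m n : ℕ) := RingQuot (YRel m n)

/-- The canonical projection from the free algebra onto the Yangian. -/
def proj (m n : ℕ) : FA (m+n) →ₐ[ℂ] Yangian m n := RingQuot.mkAlgHom ℂ (YRel m n)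

/-- The generator `t_{ij}^{(r+1)}` of `Y(gl_{m|n})` (`tGen i j r` is `t_{ij}^{(r+1)}`,
so that as `r` ranges over `ℕ` we get exactly the generators `t_{ij}^{(s)}`, `s ≥ 1`). -/
def tGen {m n : ℕ} (i j : Fin (m+n)) (r : ℕ) : Yangian m n :=
  proj m n (FreeAlgebra.ι ℂ (i, j, r))

/-- The generating series `t_{ij}(u) ∈ Y(gl_{m|n})[[u^{-1}]]`. -/
def t {m n : ℕ} (i j : Fin (m+n)) : PowerSeries (Yangian m n) :=
  PowerSeries.mk fun r => if r = 0 then (if i = j then 1 else 0) else tGen i j (r - 1)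

/-- The matrix `T(u)`. -/
def T (m n : ℕ) : Matrix (Fin (m+n)) (Fin (m+n)) (PowerSeries (Yangian m n)) :=
  Matrix.of fun i j => t i j

/-- The inverse matrix `T(u)^{-1}` (`T(u)` is a unit of the matrix ring, since its
constant term is the identity matrix, so `Ring.inverse` produces the genuine inverse). -/
def T' (m n : ℕ) : Matrix (Fin (m+n)) (Fin (m+n)) (PowerSeries (Yangian m n)) :=
  Ring.inverse (T m n)

/-- The series `t'_{ij}(u)`: the `(i,j)` entry of `T(u)^{-1}`. -/
def t' {m n : ℕ} (i j : Fin (m+n)) : PowerSeries (Yangian m n) := T' m n i j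

/-- `g(u - c)`: substitute `u - c` for `u` and expand in powers of `u^{-1}`, using
`(u-c)^{-r} = Σ_{s ≥ 0} C(r+s-1, s) c^s u^{-r-s}`. -/
def shift {A : Type*} [Ring A] (c : ℤ) (g : PowerSeries A) : PowerSeries A :=
  PowerSeries.mk fun p => ∑ r ∈ Finset.range (p+1),
    (((p-1).choose (p-r) : ℤ) * c ^ (p-r)) • PowerSeries.coeff r g

/-- `g(-u)`: replace `u^{-r}` by `(-1)^r u^{-r}`. -/
def negu {A : Type*} [Ring A] (g : PowerSeries A) : PowerSeries A :=
  PowerSeries.mk fun p => ((-1 : ℤ) ^ p) • PowerSeries.coeff p g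

/-- The quantum determinant type series
`C_m(u) = Σ_{τ ∈ S_m} sgn τ · t_{τ(1)1}(u) t_{τ(2)2}(u-1) ⋯ t_{τ(m)m}(u-m+1)`
of the `gl_m` block of `Y(gl_{m|n})`. -/
def Cm (m n : ℕ) : PowerSeries (Yangian m n) :=
  ∑ τ : Equiv.Perm (Fin m), (Equiv.Perm.sign τ : ℤ) •
    ((List.finRange m).map fun (a : Fin m) =>
      shift ((a : ℕ) : ℤ)
        (t (Fin.castLE (Nat.le_add_right m n) (τ a))
           (Fin.castLE (Nat.le_add_right m n) a))).prod

/-- The second factor of the quantum Berezinian: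
`Σ_{σ ∈ S_n} sgn σ · t'_{m+1, m+σ(1)}(u-m+1) ⋯ t'_{m+n, m+σ(n)}(u-m+n)`. -/
def berSecond (m n : ℕ) : PowerSeries (Yangian m n) :=
  ∑ σ : Equiv.Perm (Fin n), (Equiv.Perm.sign σ : ℤ) •
    ((List.finRange n).map fun (b : Fin n) =>
      shift ((m : ℤ) - 1 - (b : ℕ))
        (t' (Fin.natAdd m b) (Fin.natAdd m (σ b)))).prod

/-- The quantum Berezinian `b_{m|n}(u)`. -/
def ber (m n : ℕ) : PowerSeries (Yangian m n) := Cm m n * berSecond m n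

/-- Gauss decomposition data: `D` is diagonal (with invertible diagonal entries, i.e.
constant term `1`), `E` upper unitriangular, `F` lower unitriangular, and
`T(u) = F(u) D(u) E(u)`. -/
def IsGauss (m n : ℕ)
    (F D E : Matrix (Fin (m+n)) (Fin (m+n)) (PowerSeries (Yangian m n))) : Prop :=
  (∀ i j, i ≠ j → D i j = 0) ∧
  (∀ i, PowerSeries.constantCoeff (D i i) = 1) ∧
  (∀ i, E i i = 1) ∧ (∀ i j : Fin (m+n), (j : ℕ) < (i : ℕ) → E i j = 0) ∧
  (∀ i, F i i = 1) ∧ (∀ i j : Fin (m+n), (i : ℕ) < (j : ℕ) → F i j = 0) ∧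
  T m n = F * D * E

/-- The top-left `(i+1) × (i+1)` submatrix of `T(u)` (`0`-indexed `i`). -/
def subT (m n : ℕ) (i : Fin (m+n)) :
    Matrix (Fin ((i : ℕ)+1)) (Fin ((i : ℕ)+1)) (PowerSeries (Yangian m n)) :=
  Matrix.of fun a b => t (Fin.castLE i.isLt a) (Fin.castLE i.isLt b)

/-- The quasideterminant `d_{i+1}(u)` (`0`-indexed: `dQ m n i` is the `(i+1, i+1)`
quasideterminant of the top-left `(i+1) × (i+1)` submatrix of `T(u)`). -/
def dQ (m n : ℕ) (i : Fin (m+n)) : PowerSeries (Yangian m n) :=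
  Ring.inverse (Ring.inverse (subT m n i) (Fin.last (i : ℕ)) (Fin.last (i : ℕ)))

/-- Formal series in the two variables `u^{-1}`, `v^{-1}` (variable `0` is `u^{-1}`,
variable `1` is `v^{-1}`). -/
abbrev Bi (A : Type*) := MvPowerSeries (Fin 2) A

/-- Embed a series in `u^{-1}` into the two-variable series ring. -/
def inU {A : Type*} [Semiring A] (g : PowerSeries A) : Bi A :=
  fun d => if d 1 = 0 then PowerSeries.coeff (d 0) g else 0

/-- Embed a series in `v^{-1}` into the two-variable series ring. -/
def inV {A : Type*} [Semiring A] (g : PowerSeries A) : Bi A :=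
  fun d => if d 0 = 0 then PowerSeries.coeff (d 1) g else 0

/-- The coefficient of `u^{-r} v^{-s}`. -/
def bc {A : Type*} [Semiring A] (r s : ℕ) (g : Bi A) : A :=
  MvPowerSeries.coeff (Finsupp.single 0 r + Finsupp.single 1 s) g

/-- The characterizing property of the automorphism `ω_{m|n}`:
`ω(t_{ij}(u)) = t'_{ij}(-u)`, i.e. `T(u) ↦ T(-u)^{-1}` coefficientwise. -/
def omegaProp (m n : ℕ) (ω : Yangian m n →ₐ[ℂ] Yangian m n) : Prop :=
  ∀ i j : Fin (m+n), PowerSeries.map ω.toRingHom (t i j) = negu (t' i j)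

/-- The index map `i ↦ m+n+1-i` (in `1`-based labelling) from the indices of
`Y(gl_{m|n})` to those of `Y(gl_{n|m})`. -/
def flipIdx {m n : ℕ} (i : Fin (m+n)) : Fin (n+m) :=
  ⟨m + n - 1 - (i : ℕ), by have := i.isLt; omega⟩

/-- The characterizing property of the isomorphism `ρ_{m|n} : Y(gl_{m|n}) → Y(gl_{n|m})`:
`ρ(t_{ij}(u)) = t_{m+n+1-i, m+n+1-j}(-u)`. -/
def rhoProp (m n : ℕ) (ρ : Yangian m n →ₐ[ℂ] Yangian n m) : Prop :=
  ∀ i j : Fin (m+n), PowerSeries.map ρ.toRingHom (t i j) = negu (t (flipIdx i) (flipIdx j))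

/-- The index map `i ↦ k + i` from indices of `Y(gl_{m|n})` to indices of
`Y(gl_{m+k|n})` (whose total size `M + n` is recorded via `M = m + k`). -/
def addIdx {m n : ℕ} (k M : ℕ) (hM : M = m + k) (i : Fin (m+n)) : Fin (M+n) :=
  ⟨k + (i : ℕ), by have := i.isLt; omega⟩

/-- The characterizing property of the inclusion `φ_{m|n} : Y(gl_{m|n}) → Y(gl_{m+k|n})`:
`t_{ij}^{(r)} ↦ t_{k+i, k+j}^{(r)}`. -/
def phiProp (m n k M : ℕ) (hM : M = m + k) (φ : Yangian m n →ₐ[ℂ] Yangian M n) : Prop :=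
  ∀ i j : Fin (m+n),
    PowerSeries.map φ.toRingHom (t i j) = t (addIdx k M hM i) (addIdx k M hM j)

/-- The `(k+1, k+1)` quasideterminant of a `(k+1) × (k+1)` matrix. -/
def qdet {R : Type*} [Ring R] {k : ℕ} (X : Matrix (Fin (k+1)) (Fin (k+1)) R) : R :=
  Ring.inverse (Ring.inverse X (Fin.last k) (Fin.last k))

end SuperYangian
namespace SuperYangian

/-- `d_1(u) = t_{11}(u)` in `Y(gl_{1|1})`. -/
def d1 : PowerSeries (Yangian 1 1) := t (m := 1) (n := 1) 0 0

/-- `e_1(u) = t_{11}(u)^{-1} t_{12}(u)` in `Y(gl_{1|1})`. -/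
def e1 : PowerSeries (Yangian 1 1) := Ring.inverse d1 * t (m := 1) (n := 1) 0 1

/-- `f_1(u) = t_{21}(u) t_{11}(u)^{-1}` in `Y(gl_{1|1})`. -/
def f1 : PowerSeries (Yangian 1 1) := t (m := 1) (n := 1) 1 0 * Ring.inverse d1

/-- `d_2(u) = t_{22}(u) - t_{21}(u) t_{11}(u)^{-1} t_{12}(u)` in `Y(gl_{1|1})`. -/
def d2 : PowerSeries (Yangian 1 1) :=
  t (m := 1) (n := 1) 1 1
    - t (m := 1) (n := 1) 1 0 * Ring.inverse d1 * t (m := 1) (n := 1) 0 1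

end SuperYangian

namespace SuperYangian

/-! ### Auxiliary machinery for Statement 13 -/

/-- The coefficient `t_{ij}^{(p)}` (with `t_{ij}^{(0)} = δ_{ij}`). -/
def tcoef {m n : ℕ} (i j : Fin (m+n)) (p : ℕ) : Yangian m n :=
  PowerSeries.coeff p (t i j)

lemma proj_coeff_tF {m n : ℕ} (i j : Fin (m+n)) (p : ℕ) :
    proj m n (PowerSeries.coeff p (tF i j)) = tcoef i j p := by
  simp only [tF, t, tcoef, PowerSeries.coeff_mk]
  split_ifs with h1 h2
  · simp
  · simp
  · rfl

lemma yrel {m n : ℕ} (i j k l : Fin (m+n)) (r s : ℕ) :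
    (tcoef i j (r+1) * tcoef k l s - tcoef k l s * tcoef i j (r+1))
      - (tcoef i j r * tcoef k l (s+1) - tcoef k l (s+1) * tcoef i j r)
    = sgn3 m i j k • (tcoef k j r * tcoef i l s - tcoef k j s * tcoef i l r) := by
  have h := RingQuot.mkAlgHom_rel ℂ (YRel.rel i j k l r s (m := m) (n := n))
  rw [map_zero] at h
  have h2 : proj m n (relElt m i j k l r s) = 0 := h
  simp only [relElt, map_sub, map_mul, map_zsmul, proj_coeff_tF] at h2
  rwa [sub_eq_zero] at h2

/-! Specialization to `Y(gl_{1|1})`. -/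

/-- Coefficients of `t_{11}(u)` in `Y(gl_{1|1})`. -/
def cA (p : ℕ) : Yangian 1 1 := tcoef (m := 1) (n := 1) 0 0 p
/-- Coefficients of `t_{12}(u)` in `Y(gl_{1|1})`. -/
def cB (p : ℕ) : Yangian 1 1 := tcoef (m := 1) (n := 1) 0 1 p

lemma cA_zero : cA 0 = 1 := by simp [cA, tcoef, t]

lemma cB_zero : cB 0 = 0 := by
  simp only [cB, tcoef, t, PowerSeries.coeff_mk, if_pos rfl]
  norm_num

lemma sgn_000 : sgn3 1 (0 : Fin (1+1)) 0 0 = 1 := by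
  simp [sgn3, par]

lemma rel_aa (r s : ℕ) :
    (cA (r+1) * cA s - cA s * cA (r+1)) - (cA r * cA (s+1) - cA (s+1) * cA r)
      = cA r * cA s - cA s * cA r := by
  have h := yrel (m := 1) (n := 1) 0 0 0 0 r s
  rwa [sgn_000, one_smul] at h

lemma rel_ab (r s : ℕ) :
    (cA (r+1) * cB s - cB s * cA (r+1)) - (cA r * cB (s+1) - cB (s+1) * cA r)
      = cA r * cB s - cA s * cB r := by
  have h := yrel (m := 1) (n := 1) 0 0 0 1 r s
  rwa [sgn_000, one_smul] at h

lemma cA_comm : ∀ r s, cA r * cA s = cA s * cA r := by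
  intro r
  induction r with
  | zero => intro s; rw [cA_zero, one_mul, mul_one]
  | succ r ih =>
    intro s
    have h := rel_aa r s
    rw [ih s, ih (s+1), sub_self, sub_self, sub_zero] at h
    rwa [sub_eq_zero] at h

/-- The coefficients of the inverse series of `d_1(u)`. -/
def gi : ℕ → Yangian 1 1
  | 0 => 1
  | (p+1) => -∑ k ∈ (Finset.range (p+1)).attach, gi k * cA (p+1-(k : ℕ))
  decreasing_by exact Finset.mem_range.mp k.2

lemma gi_succ (p : ℕ) :
    gi (p+1) = -∑ k ∈ Finset.range (p+1), gi k * cA (p+1-k) := by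
  rw [gi]
  exact neg_inj.mpr (Finset.sum_attach (Finset.range (p+1)) (fun k => gi k * cA (p+1-k)))

lemma cA_mem (x : ℕ) : cA x ∈ Subring.centralizer (Set.range cA) := by
  rw [Subring.mem_centralizer_iff]
  rintro g ⟨y, rfl⟩
  exact cA_comm y x

lemma gi_mem : ∀ p, gi p ∈ Subring.centralizer (Set.range cA) := by
  intro p
  induction p using Nat.strong_induction_on with
  | _ p ih =>
    match p with
    | 0 =>
      have h0 : gi 0 = 1 := by rw [gi]
      rw [h0]; exact one_mem _
    | (q+1) =>
      rw [gi_succ]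
      exact neg_mem (sum_mem fun k hk =>
        mul_mem (ih k (Finset.mem_range.mp hk)) (cA_mem _))

lemma gi_comm (p r : ℕ) : gi p * cA r = cA r * gi p :=
  ((Subring.mem_centralizer_iff.mp (gi_mem p)) (cA r) ⟨r, rfl⟩).symm

/-- The inverse series of `d_1(u)`. -/
def Ginv : PowerSeries (Yangian 1 1) := PowerSeries.mk gi

lemma coeff_d1 (p : ℕ) : PowerSeries.coeff p d1 = cA p := rfl

lemma coeff_tb (p : ℕ) : PowerSeries.coeff p (t (m := 1) (n := 1) 0 1) = cB p := rfl

lemma G_mul_d1 : Ginv * d1 = 1 := by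
  ext p
  rw [PowerSeries.coeff_mul, Finset.Nat.sum_antidiagonal_eq_sum_range_succ
    (fun a b => PowerSeries.coeff a Ginv * PowerSeries.coeff b d1)]
  simp only [Ginv, PowerSeries.coeff_mk, coeff_d1, PowerSeries.coeff_one]
  cases p with
  | zero => simp [gi, cA_zero]
  | succ p =>
    rw [Finset.sum_range_succ, Nat.sub_self, cA_zero, mul_one, gi_succ]
    simp only [if_neg (Nat.succ_ne_zero p)]
    rw [add_neg_cancel]

lemma d1_mul_G : d1 * Ginv = 1 := by
  rw [← G_mul_d1]
  ext p
  rw [PowerSeries.coeff_mul, PowerSeries.coeff_mul,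
    Finset.Nat.sum_antidiagonal_eq_sum_range_succ
      (fun a b => PowerSeries.coeff a d1 * PowerSeries.coeff b Ginv),
    Finset.Nat.sum_antidiagonal_eq_sum_range_succ
      (fun a b => PowerSeries.coeff a Ginv * PowerSeries.coeff b d1)]
  simp only [Ginv, PowerSeries.coeff_mk, coeff_d1]
  rw [← Finset.sum_range_reflect (fun k => gi k * cA (p - k)) (p+1)]
  refine Finset.sum_congr rfl fun k hk => ?_
  have hk' : k ≤ p := Nat.lt_succ_iff.mp (Finset.mem_range.mp hk)
  rw [← gi_comm]
  congr 2 <;> omega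

/-- `d_1(u)` as a unit of the power series ring. -/
def d1u : (PowerSeries (Yangian 1 1))ˣ := ⟨d1, Ginv, d1_mul_G, G_mul_d1⟩

lemma rinv_d1 : Ring.inverse d1 = Ginv := by
  have h : Ring.inverse (d1u : PowerSeries (Yangian 1 1))
      = ((d1u⁻¹ : _ˣ) : PowerSeries (Yangian 1 1)) := Ring.inverse_unit d1u
  exact h

lemma e1_eq : e1 = Ginv * t (m := 1) (n := 1) 0 1 := by rw [e1, rinv_d1]

lemma d1_mul_e1 : d1 * e1 = t (m := 1) (n := 1) 0 1 := by
  rw [e1_eq, ← mul_assoc, d1_mul_G, one_mul]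

lemma coeff_e1 (p : ℕ) :
    PowerSeries.coeff p e1 = ∑ k ∈ Finset.range (p+1), gi k * cB (p-k) := by
  rw [e1_eq, PowerSeries.coeff_mul, Finset.Nat.sum_antidiagonal_eq_sum_range_succ
    (fun a b => PowerSeries.coeff a Ginv * PowerSeries.coeff b (t 0 1))]
  simp only [Ginv, PowerSeries.coeff_mk]
  rfl

/-! Coefficient extraction lemmas for the two-variable embeddings. -/

lemma fin2_ext {p q : Fin 2 →₀ ℕ} (h0 : p 0 = q 0) (h1 : p 1 = q 1) : p = q := by
  ext i
  fin_cases i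
  · exact h0
  · exact h1

lemma dd0 (r s : ℕ) :
    (Finsupp.single (0 : Fin 2) r + Finsupp.single (1 : Fin 2) s) 0 = r := by
  rw [Finsupp.add_apply, Finsupp.single_eq_same, Finsupp.single_eq_of_ne (by decide), add_zero]

lemma dd1 (r s : ℕ) :
    (Finsupp.single (0 : Fin 2) r + Finsupp.single (1 : Fin 2) s) 1 = s := by
  rw [Finsupp.add_apply, Finsupp.single_eq_same, Finsupp.single_eq_of_ne (by decide), zero_add]

lemma inU_apply {A : Type*} [Semiring A] (x : PowerSeries A) (d : Fin 2 →₀ ℕ) :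
    MvPowerSeries.coeff d (inU x) = if d 1 = 0 then PowerSeries.coeff (d 0) x else 0 :=
  rfl

lemma inV_apply {A : Type*} [Semiring A] (x : PowerSeries A) (d : Fin 2 →₀ ℕ) :
    MvPowerSeries.coeff d (inV x) = if d 0 = 0 then PowerSeries.coeff (d 1) x else 0 :=
  rfl

lemma bc_sub {A : Type*} [Ring A] (r s : ℕ) (X Y : Bi A) :
    bc r s (X - Y) = bc r s X - bc r s Y := by
  simp only [bc]
  exact map_sub _ _ _

lemma bcUV {A : Type*} [Ring A] (r s : ℕ) (x y : PowerSeries A) :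
    bc r s (inU x * inV y) = PowerSeries.coeff r x * PowerSeries.coeff s y := by
  rw [bc, MvPowerSeries.coeff_mul]
  rw [Finset.sum_eq_single_of_mem ((Finsupp.single (0 : Fin 2) r, Finsupp.single (1 : Fin 2) s))
    (Finset.HasAntidiagonal.mem_antidiagonal.mpr rfl)]
  · rw [inU_apply, inV_apply, Finsupp.single_eq_same, Finsupp.single_eq_same,
      Finsupp.single_eq_of_ne (by decide), Finsupp.single_eq_of_ne (by decide),
      if_pos rfl, if_pos rfl]
  · rintro ⟨p1, p2⟩ hmem hne
    rw [Finset.HasAntidiagonal.mem_antidiagonal] at hmem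
    rw [inU_apply, inV_apply]
    by_cases h1 : p1 1 = 0
    · by_cases h2 : p2 0 = 0
      · exfalso
        apply hne
        have e0 : p1 0 + p2 0 = r := by
          have := congrArg (fun f => f 0) hmem
          simpa [dd0] using this
        have e1 : p1 1 + p2 1 = s := by
          have := congrArg (fun f => f 1) hmem
          simpa [dd1] using this
        have hp1 : p1 = Finsupp.single (0 : Fin 2) r := by
          refine fin2_ext ?_ ?_
          · rw [Finsupp.single_eq_same]; omega
          · rw [Finsupp.single_eq_of_ne (by decide)]; omega
        have hp2 : p2 = Finsupp.single (1 : Fin 2) s := by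
          refine fin2_ext ?_ ?_
          · rw [Finsupp.single_eq_of_ne (by decide)]; omega
          · rw [Finsupp.single_eq_same]; omega
        rw [hp1, hp2]
      · rw [if_neg h2, mul_zero]
    · rw [if_neg h1, zero_mul]

lemma bcVU {A : Type*} [Ring A] (r s : ℕ) (x y : PowerSeries A) :
    bc r s (inV y * inU x) = PowerSeries.coeff s y * PowerSeries.coeff r x := by
  rw [bc, MvPowerSeries.coeff_mul]
  rw [Finset.sum_eq_single_of_mem ((Finsupp.single (1 : Fin 2) s, Finsupp.single (0 : Fin 2) r))
    (Finset.HasAntidiagonal.mem_antidiagonal.mpr (add_comm _ _))]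
  · rw [inU_apply, inV_apply, Finsupp.single_eq_same, Finsupp.single_eq_same,
      Finsupp.single_eq_of_ne (by decide), Finsupp.single_eq_of_ne (by decide),
      if_pos rfl, if_pos rfl]
  · rintro ⟨p1, p2⟩ hmem hne
    rw [Finset.HasAntidiagonal.mem_antidiagonal] at hmem
    rw [inU_apply, inV_apply]
    by_cases h1 : p1 0 = 0
    · by_cases h2 : p2 1 = 0
      · exfalso
        apply hne
        have e0 : p1 0 + p2 0 = r := by
          have := congrArg (fun f => f 0) hmem
          simpa [dd0] using this
        have e1 : p1 1 + p2 1 = s := by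
          have := congrArg (fun f => f 1) hmem
          simpa [dd1] using this
        have hp1 : p1 = Finsupp.single (1 : Fin 2) s := by
          refine fin2_ext ?_ ?_
          · rw [Finsupp.single_eq_of_ne (by decide)]; omega
          · rw [Finsupp.single_eq_same]; omega
        have hp2 : p2 = Finsupp.single (0 : Fin 2) r := by
          refine fin2_ext ?_ ?_
          · rw [Finsupp.single_eq_same]; omega
          · rw [Finsupp.single_eq_of_ne (by decide)]; omega
        rw [hp1, hp2]
      · rw [if_neg h2, mul_zero]
    · rw [if_neg h1, zero_mul]

lemma bcUU {A : Type*} [Ring A] (r s : ℕ) (x y : PowerSeries A) :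
    bc r s (inU x * inU y) = if s = 0 then PowerSeries.coeff r (x * y) else 0 := by
  rw [bc, MvPowerSeries.coeff_mul]
  by_cases hs : s = 0
  · subst hs
    rw [if_pos rfl]
    have hd : Finsupp.single (0 : Fin 2) r + Finsupp.single (1 : Fin 2) 0
        = Finsupp.single (0 : Fin 2) r := by
      rw [Finsupp.single_zero, add_zero]
    rw [hd, Finsupp.antidiagonal_single, Finset.sum_map, PowerSeries.coeff_mul]
    refine Finset.sum_congr rfl ?_
    rintro ⟨a, b⟩ hp
    simp only [Function.Embedding.coe_prodMap, Function.Embedding.coeFn_mk, Prod.map_apply]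
    rw [inU_apply, inU_apply, Finsupp.single_eq_same, Finsupp.single_eq_same,
      Finsupp.single_eq_of_ne (by decide), Finsupp.single_eq_of_ne (by decide),
      if_pos rfl, if_pos rfl]
  · rw [if_neg hs]
    refine Finset.sum_eq_zero fun p hp => ?_
    rw [Finset.HasAntidiagonal.mem_antidiagonal] at hp
    have e1 : p.1 1 + p.2 1 = s := by
      have := congrArg (fun f => f 1) hp
      simpa [dd1] using this
    rw [inU_apply, inU_apply]
    by_cases h1 : p.1 1 = 0
    · rw [if_pos h1, if_neg (by omega), mul_zero]
    · rw [if_neg h1, zero_mul]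

/-! The main computation. -/

lemma sum_gi_cA (s : ℕ) :
    ∑ k ∈ Finset.range (s+1), gi k * cA (s-k) = if s = 0 then 1 else 0 := by
  have h := congrArg (PowerSeries.coeff s) G_mul_d1
  rw [PowerSeries.coeff_mul, Finset.Nat.sum_antidiagonal_eq_sum_range_succ
    (fun a b => PowerSeries.coeff a Ginv * PowerSeries.coeff b d1),
    PowerSeries.coeff_one] at h
  simpa only [Ginv, PowerSeries.coeff_mk, coeff_d1] using h

lemma comm_sum (q s : ℕ) :
    cA q * (∑ k ∈ Finset.range (s+1), gi k * cB (s-k))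
      - (∑ k ∈ Finset.range (s+1), gi k * cB (s-k)) * cA q
    = ∑ k ∈ Finset.range (s+1), gi k * (cA q * cB (s-k) - cB (s-k) * cA q) := by
  rw [Finset.mul_sum, Finset.sum_mul, ← Finset.sum_sub_distrib]
  refine Finset.sum_congr rfl fun k hk => ?_
  rw [mul_sub, ← mul_assoc, ← gi_comm, mul_assoc, mul_assoc]

lemma main_calc (r s : ℕ) :
    (cA (r+1) * (∑ k ∈ Finset.range (s+1), gi k * cB (s-k))
        - (∑ k ∈ Finset.range (s+1), gi k * cB (s-k)) * cA (r+1))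
      - (cA r * (∑ k ∈ Finset.range (s+1+1), gi k * cB (s+1-k))
        - (∑ k ∈ Finset.range (s+1+1), gi k * cB (s+1-k)) * cA r)
    = cA r * (∑ k ∈ Finset.range (s+1), gi k * cB (s-k))
        - (if s = 0 then cB r else 0) := by
  rw [comm_sum, comm_sum r (s+1)]
  rw [Finset.sum_range_succ (fun k => gi k * (cA r * cB (s+1-k) - cB (s+1-k) * cA r)) (s+1)]
  rw [Nat.sub_self, cB_zero, mul_zero, zero_mul, sub_zero, mul_zero, add_zero]
  rw [← Finset.sum_sub_distrib]
  have step : ∀ k ∈ Finset.range (s+1),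
      gi k * (cA (r+1) * cB (s-k) - cB (s-k) * cA (r+1))
        - gi k * (cA r * cB (s+1-k) - cB (s+1-k) * cA r)
      = gi k * (cA r * cB (s-k)) - gi k * (cA (s-k) * cB r) := by
    intro k hk
    have hk' : k ≤ s := Nat.lt_succ_iff.mp (Finset.mem_range.mp hk)
    have hsub : s + 1 - k = (s - k) + 1 := by omega
    rw [hsub, ← mul_sub, rel_ab r (s-k), mul_sub]
  rw [Finset.sum_congr rfl step, Finset.sum_sub_distrib]
  congr 1
  · rw [Finset.mul_sum]
    refine Finset.sum_congr rfl fun k hk => ?_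
    rw [← mul_assoc, gi_comm, mul_assoc]
  · have ha : ∀ k ∈ Finset.range (s+1),
        gi k * (cA (s-k) * cB r) = (gi k * cA (s-k)) * cB r :=
      fun k hk => (mul_assoc _ _ _).symm
    rw [Finset.sum_congr rfl ha, ← Finset.sum_mul, sum_gi_cA]
    split_ifs
    · rw [one_mul]
    · rw [zero_mul]

end SuperYangian
namespace SuperYangian

/-- In `Y(gl_{1|1})`:
`(u-v)[d_1(u), e_1(v)] = d_1(u)(e_1(v) - e_1(u))`, stated coefficientwise
(coefficient of `u^{-r} v^{-s}` after clearing the factor `u - v`, inside the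
two-variable series ring). -/
theorem d1_e1_relation (r s : ℕ) :
    bc (r+1) s (inU d1 * inV e1 - inV e1 * inU d1)
      - bc r (s+1) (inU d1 * inV e1 - inV e1 * inU d1)
    = bc r s (inU d1 * (inV e1 - inU e1)) := by
  simp only [mul_sub, bc_sub, bcUV, bcVU, bcUU]
  rw [d1_mul_e1]
  simp only [coeff_d1, coeff_tb, coeff_e1]
  exact main_calc r s

end SuperYangian
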